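/- For every integer m, the polynomial f_m(X) = X³ − mX² − (m+3)X − 1 is irreducible over ℚ, its discriminant equals (m²+3m+9)², and its Galois group over ℚ is cyclic of order 3. -/

import Mathlib

open Polynomial

/-- The simplest cubic polynomial `f_m(X) = X³ − mX² − (m+3)X − 1` over `ℚ`. -/
noncomputable def f (m : ℤ) : ℚ[X] :=
  X ^ 3 - C (m : ℚ) * X ^ 2 - C ((m : ℚ) + 3) * X - 1

lemma f_natDegree (m : ℤ) : (f m).natDegree = 3 := by
  unfold f; compute_degree!

lemma f_monic (m : ℤ) : (f m).Monic := by
  unfold f; monicity!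

lemma f_ne_zero (m : ℤ) : f m ≠ 0 := (f_monic m).ne_zero

lemma f_irred (m : ℤ) : Irreducible (f m) := by
  rw [irreducible_iff_roots_eq_zero_of_degree_le_three (by rw [f_natDegree]; norm_num)
    (by rw [f_natDegree])]
  rw [Multiset.eq_zero_iff_forall_notMem]
  intro x hx
  rw [mem_roots (f_ne_zero m), IsRoot, f] at hx
  simp only [eval_sub, eval_mul, eval_pow, eval_X, eval_C, eval_one] at hx
  -- x is an algebraic integer, hence an integer
  have hg : aeval x (X ^ 3 - C m * X ^ 2 - C (m + 3) * X - 1 : ℤ[X]) = 0 := by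
    simp only [map_sub, map_mul, map_pow, aeval_X, aeval_C, map_one, map_add, map_intCast, map_ofNat, algebraMap_int_eq, eq_intCast]
    linear_combination hx
  have hmon : (X ^ 3 - C m * X ^ 2 - C (m + 3) * X - 1 : ℤ[X]).Monic := by monicity!
  obtain ⟨n, hn⟩ := isInteger_of_is_root_of_monic hmon hg
  rw [eq_intCast] at hn  -- hn : (n:ℚ) = x
  subst hn
  have hz : n ^ 3 - m * n ^ 2 - (m + 3) * n - 1 = 0 := by exact_mod_cast hx
  have hdvd : n ∣ 1 := ⟨n ^ 2 - m * n - (m + 3), by linear_combination -hz⟩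
  rcases Int.isUnit_iff.mp (isUnit_of_dvd_one hdvd) with h | h <;> subst h <;> omega

section Factor
variable {K : Type*} [Field K] [Algebra ℚ K]

omit [Algebra ℚ K] in
lemma root_ne (m : ℤ) {θ : K} (hθ : θ ^ 3 - m * θ ^ 2 - ((m : K) + 3) * θ - 1 = 0) :
    θ ≠ 0 ∧ 1 + θ ≠ 0 := by
  constructor
  · rintro rfl; simp at hθ
  · intro h
    exact one_ne_zero (α := K)
      (by linear_combination hθ + (-θ ^ 2 + ((m : K) + 1) * θ + 2) * h)

lemma key_factor (m : ℤ) {θ : K} (hθ : θ ^ 3 - m * θ ^ 2 - ((m : K) + 3) * θ - 1 = 0) :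
    (f m).map (algebraMap ℚ K) =
      (X - C θ) * (X - C (-(1 + θ)⁻¹)) * (X - C (-(1 + θ) / θ)) := by
  obtain ⟨h0, h1⟩ := root_ne m hθ
  set u : K := -(1 + θ)⁻¹ with hu
  set v : K := -(1 + θ) / θ with hv
  have h3 : θ * (u * v) = 1 := by rw [hu, hv]; field_simp
  have hsum : θ + (u + v) = (m : K) := by
    rw [hu, hv]; field_simp; linear_combination hθ
  have hpair : θ * u + (θ * v + u * v) = -((m : K) + 3) := by
    rw [hu, hv]; field_simp; linear_combination -hθ
  have expand : (X - C θ) * (X - C u) * (X - C v) =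
      X ^ 3 - C (θ + (u + v)) * X ^ 2 + C (θ * u + (θ * v + u * v)) * X - C (θ * (u * v)) := by
    simp only [C_add, C_mul]; ring
  rw [expand, hsum, hpair, h3]
  have hmap : (f m).map (algebraMap ℚ K) =
      X ^ 3 - C ((m : K)) * X ^ 2 - C ((m : K) + 3) * X - 1 := by
    simp only [f, Polynomial.map_sub, Polynomial.map_mul, Polynomial.map_pow, map_X, map_C,
      Polynomial.map_one, map_add, map_intCast, map_ofNat, Polynomial.map_intCast, Polynomial.map_add, Polynomial.map_ofNat]
  rw [hmap]
  simp only [C_neg, C_add, C_1]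
  ring

end Factor

lemma part2 (m : ℤ) :
    ∃ r₁ r₂ r₃ : ℂ, (f m).map (algebraMap ℚ ℂ) = (X - C r₁) * (X - C r₂) * (X - C r₃) ∧
      ((r₁ - r₂) * (r₁ - r₃) * (r₂ - r₃)) ^ 2 = ((m : ℂ) ^ 2 + 3 * (m : ℂ) + 9) ^ 2 := by
  obtain ⟨θ, hθ0⟩ := IsAlgClosed.exists_root (k := ℂ) ((f m).map (algebraMap ℚ ℂ))
    (by rw [degree_map, degree_eq_natDegree (f_ne_zero m), f_natDegree]; norm_num)
  have hθ : θ ^ 3 - (m : ℂ) * θ ^ 2 - ((m : ℂ) + 3) * θ - 1 = 0 := by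
    have := hθ0
    simp only [IsRoot, f, Polynomial.map_sub, Polynomial.map_mul, Polynomial.map_pow, map_X,
      map_C, Polynomial.map_one, map_add, map_intCast, map_ofNat, Polynomial.map_intCast,
      Polynomial.map_add, Polynomial.map_ofNat, eval_sub, eval_mul, eval_pow, eval_X, eval_one,
      eval_add, eval_intCast, eval_ofNat] at this
    linear_combination this
  obtain ⟨h0, h1⟩ := root_ne m hθ
  refine ⟨θ, -(1 + θ)⁻¹, -(1 + θ) / θ, key_factor m hθ, ?_⟩
  have hne : θ ^ 2 + θ ≠ 0 := by
    intro h
    exact mul_ne_zero h0 h1 (by linear_combination h)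
  have hδ : ((θ - -(1 + θ)⁻¹) * (θ - -(1 + θ) / θ) * (-(1 + θ)⁻¹ - -(1 + θ) / θ)) *
      (θ ^ 2 + θ) ^ 2 = (θ ^ 2 + θ + 1) ^ 3 := by
    field_simp
    ring
  have key : ((m : ℂ) ^ 2 + 3 * (m : ℂ) + 9) * (θ ^ 2 + θ) ^ 2 = (θ ^ 2 + θ + 1) ^ 3 := by
    linear_combination (-((m : ℂ) * (θ ^ 2 + θ) + θ ^ 3 + 3 * θ ^ 2 - 1)) * hθ
  have hδq : (θ - -(1 + θ)⁻¹) * (θ - -(1 + θ) / θ) * (-(1 + θ)⁻¹ - -(1 + θ) / θ)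
      = (m : ℂ) ^ 2 + 3 * (m : ℂ) + 9 :=
    mul_right_cancel₀ (pow_ne_zero 2 hne) (hδ.trans key.symm)
  rw [hδq]

open IntermediateField in
lemma finrank_sf (m : ℤ) : Module.finrank ℚ (f m).SplittingField = 3 := by
  obtain ⟨θ, hθ0⟩ := Splits.exists_eval_eq_zero
    (SplittingField.splits (f m))
    (by rw [degree_map, degree_eq_natDegree (f_ne_zero m), f_natDegree]; norm_num)
  rw [eval_map] at hθ0
  have haev : aeval θ (f m) = 0 := by rwa [aeval_def]
  have hθ : θ ^ 3 - (m : (f m).SplittingField) * θ ^ 2 -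
      ((m : (f m).SplittingField) + 3) * θ - 1 = 0 := by
    have hgen : ∀ {K : Type} [Field K] [Algebra ℚ K] (x : K),
        aeval x (f m) = x ^ 3 - (m : K) * x ^ 2 - ((m : K) + 3) * x - 1 := by
      intro K _ _ x
      simp only [f, map_sub, map_mul, map_pow, aeval_X, aeval_C, map_one, map_add, map_intCast,
        map_ofNat]
    have := haev
    rw [hgen] at this
    linear_combination this
  obtain ⟨h0, h1⟩ := root_ne m hθ
  have hint : IsIntegral ℚ θ := ⟨f m, f_monic m, hθ0⟩
  have hmin : minpoly ℚ θ = f m := (minpoly.eq_of_irreducible_of_monic (f_irred m) haev (f_monic m)).symm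
  have hsub : ∀ x ∈ (f m).rootSet (f m).SplittingField, x ∈ ℚ⟮θ⟯ := by
    intro x hx
    rw [mem_rootSet] at hx
    have hx2 : eval x ((f m).map (algebraMap ℚ (f m).SplittingField)) = 0 := by
      rw [eval_map, ← aeval_def, hx.2]
    rw [key_factor m hθ] at hx2
    simp only [eval_mul, eval_sub, eval_X, eval_C, mul_eq_zero, sub_eq_zero] at hx2
    have hθK : θ ∈ ℚ⟮θ⟯ := IntermediateField.mem_adjoin_simple_self ℚ θ
    rcases hx2 with (h | h) | h <;> rw [h]
    · exact hθK
    · exact neg_mem (inv_mem (add_mem (one_mem _) hθK))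
    · exact div_mem (neg_mem (add_mem (one_mem _) hθK)) hθK
  have htop : ℚ⟮θ⟯ = (⊤ : IntermediateField ℚ (f m).SplittingField) := by
    apply IntermediateField.toSubalgebra_injective
    rw [IntermediateField.top_toSubalgebra]
    exact top_unique ((SplittingField.adjoin_rootSet (f m)) ▸
      Algebra.adjoin_le (fun x hx => hsub x hx))
  have := IntermediateField.adjoin.finrank hint
  rw [hmin, f_natDegree] at this
  rw [← IntermediateField.finrank_top', ← htop, this]

theorem stmt16 (m : ℤ) :
    Irreducible (f m) ∧
    (∃ r₁ r₂ r₃ : ℂ, (f m).map (algebraMap ℚ ℂ) = (X - C r₁) * (X - C r₂) * (X - C r₃) ∧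
      ((r₁ - r₂) * (r₁ - r₃) * (r₂ - r₃)) ^ 2 = ((m : ℂ) ^ 2 + 3 * (m : ℂ) + 9) ^ 2) ∧
    IsCyclic (f m).Gal ∧ Nat.card (f m).Gal = 3 := by
  have hcard : Nat.card (f m).Gal = 3 := by
    rw [Gal.card_of_separable (f_irred m).separable, finrank_sf]
  have : Fact (Nat.Prime 3) := ⟨by norm_num⟩
  exact ⟨f_irred m, part2 m, isCyclic_of_prime_card hcard, hcard⟩
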